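/- Let Q = (I, H, Ω) be a finite quiver whose orientation Ω contains no oriented cycles, and let i ∈ I. Then there exists a sequence of vertices (i₁, …, i_m) such that for each s, the vertex i_s is a source in the orientation μ_{i_{s−1}} ⋯ μ_{i_1}(Ω), and i is a source in μ_{i_m} ⋯ μ_{i_1}(Ω), where μ_j denotes the mutation reversing all arrows incident to j. -/

import Mathlib

/-- Mutation of an orientation `Ω` at a vertex `j`: all arrows of `Ω` incident to `j`
are replaced by their reversals (`bar`), the other arrows are kept. -/
def mutate {I H : Type} [DecidableEq I] [DecidableEq H]
    (src tgt : H → I) (bar : H → H) (j : I) (Ω : Finset H) : Finset H :=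
  (Ω.filter fun h => src h ≠ j ∧ tgt h ≠ j)
    ∪ ((Ω.filter fun h => src h = j ∨ tgt h = j).image bar)

/-- `j` is a source for the orientation `Ω`: no arrow of `Ω` ends at `j`. -/
def IsSource {I H : Type} (tgt : H → I) (Ω : Finset H) (j : I) : Prop :=
  ∀ h ∈ Ω, tgt h ≠ j

/-- `Ω` contains an oriented cycle. -/
def HasCycle {I H : Type} (src tgt : H → I) (Ω : Finset H) : Prop :=
  ∃ (n : ℕ) (f : Fin (n + 1) → H), (∀ k, f k ∈ Ω) ∧
    (∀ k : Fin n, tgt (f k.castSucc) = src (f k.succ)) ∧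
    tgt (f (Fin.last n)) = src (f 0)

/-- A sequence of vertices is good for `Ω` if each vertex in turn is a source of the
current orientation, which is then mutated at that vertex. -/
def GoodSeq {I H : Type} [DecidableEq I] [DecidableEq H]
    (src tgt : H → I) (bar : H → H) : Finset H → List I → Prop
  | _, [] => True
  | Ω, j :: l => IsSource tgt Ω j ∧ GoodSeq src tgt bar (mutate src tgt bar j Ω) l

open Relation

def QRel {I H : Type} (src tgt : H → I) (Ω : Finset H) (a b : I) : Prop :=
  ∃ h ∈ Ω, src h = a ∧ tgt h = b

lemma path_of_transGen {I H : Type} (src tgt : H → I) {Ω : Finset H} {a b : I}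
    (htg : TransGen (QRel src tgt Ω) a b) :
    ∃ (n : ℕ) (f : Fin (n+1) → H), (∀ k, f k ∈ Ω) ∧
      (∀ k : Fin n, tgt (f k.castSucc) = src (f k.succ)) ∧
      src (f 0) = a ∧ tgt (f (Fin.last n)) = b := by
  induction htg with
  | single hr =>
      obtain ⟨e, he, h1, h2⟩ := hr
      exact ⟨0, fun _ => e, fun _ => he, fun k => k.elim0, h1, h2⟩
  | tail _ hr ih =>
      obtain ⟨n, f, hmem, hchain, h0, hlast⟩ := ih
      obtain ⟨e, he, h1, h2⟩ := hr
      refine ⟨n+1, Fin.snoc f e, ?_, ?_, ?_, ?_⟩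
      · intro k
        refine Fin.lastCases ?_ ?_ k
        · simpa using he
        · intro j; simpa using hmem j
      · intro k
        refine Fin.lastCases ?_ ?_ k
        · have h3 : (Fin.last n).succ = Fin.last (n+1) := rfl
          simp only [Fin.snoc_castSucc, h3, Fin.snoc_last]
          rw [hlast, h1]
        · intro j
          simp only [Fin.succ_castSucc, Fin.snoc_castSucc]
          exact hchain j
      · have h3 : (0 : Fin (n+2)) = (0 : Fin (n+1)).castSucc := rfl
        rw [h3, Fin.snoc_castSucc, h0]
      · simp [h2]

lemma no_loop {I H : Type} (src tgt : H → I) {Ω : Finset H}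
    (hac : ¬ HasCycle src tgt Ω) : ∀ a, ¬ TransGen (QRel src tgt Ω) a a := by
  intro a h
  obtain ⟨n, f, hmem, hchain, h0, hlast⟩ := path_of_transGen src tgt h
  exact hac ⟨n, f, hmem, hchain, by rw [hlast, h0]⟩
lemma mutate_src_ne {I H : Type} [DecidableEq I] [DecidableEq H]
    (src tgt : H → I) (bar : H → H)
    (hbar_src : ∀ h, src (bar h) = tgt h) (hbar_tgt : ∀ h, tgt (bar h) = src h)
    {Ω : Finset H} {j : I} (hj : IsSource tgt Ω j) :
    ∀ h ∈ mutate src tgt bar j Ω, src h ≠ j := by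
  intro h hh
  rcases Finset.mem_union.1 hh with h1 | h1
  · exact (Finset.mem_filter.1 h1).2.1
  · obtain ⟨e, he, rfl⟩ := Finset.mem_image.1 h1
    have heΩ := (Finset.mem_filter.1 he).1
    rw [hbar_src]
    exact hj e heΩ

lemma mutate_mem_of_tgt_ne {I H : Type} [DecidableEq I] [DecidableEq H]
    (src tgt : H → I) (bar : H → H)
    (hbar_src : ∀ h, src (bar h) = tgt h) (hbar_tgt : ∀ h, tgt (bar h) = src h)
    {Ω : Finset H} {j : I} (hj : IsSource tgt Ω j)
    {h : H} (hh : h ∈ mutate src tgt bar j Ω) (ht : tgt h ≠ j) : h ∈ Ω := by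
  rcases Finset.mem_union.1 hh with h1 | h1
  · exact (Finset.mem_filter.1 h1).1
  · obtain ⟨e, he, rfl⟩ := Finset.mem_image.1 h1
    obtain ⟨heΩ, hinc⟩ := Finset.mem_filter.1 he
    exfalso
    rcases hinc with hs | ht'
    · exact ht (by rw [hbar_tgt, hs])
    · exact hj e heΩ ht'

lemma mutate_acyclic {I H : Type} [DecidableEq I] [DecidableEq H]
    (src tgt : H → I) (bar : H → H)
    (hbar_src : ∀ h, src (bar h) = tgt h) (hbar_tgt : ∀ h, tgt (bar h) = src h)
    {Ω : Finset H} {j : I} (hj : IsSource tgt Ω j)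
    (hac : ¬ HasCycle src tgt Ω) : ¬ HasCycle src tgt (mutate src tgt bar j Ω) := by
  rintro ⟨n, f, hmem, hchain, hcyc⟩
  refine hac ⟨n, f, ?_, hchain, hcyc⟩
  intro k
  -- tgt (f k) = src (f k') for the cyclic successor k'
  have htgt : ∃ k', tgt (f k) = src (f k') := by
    refine Fin.lastCases ?_ ?_ k
    · exact ⟨0, hcyc⟩
    · intro m; exact ⟨m.succ, hchain m⟩
  obtain ⟨k', hk'⟩ := htgt
  refine mutate_mem_of_tgt_ne src tgt bar hbar_src hbar_tgt hj (hmem k) ?_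
  rw [hk']
  exact mutate_src_ne src tgt bar hbar_src hbar_tgt hj (f k') (hmem k')

open Relation in
lemma main_lemma {I H : Type} [Fintype I] [Fintype H] [DecidableEq I] [DecidableEq H]
    (src tgt : H → I) (bar : H → H)
    (hbar_src : ∀ h, src (bar h) = tgt h) (hbar_tgt : ∀ h, tgt (bar h) = src h)
    (i : I) :
    ∀ (n : ℕ) (Ω : Finset H), ¬ HasCycle src tgt Ω →
      {v : I | TransGen (QRel src tgt Ω) v i}.ncard ≤ n →
      ∃ l : List I, GoodSeq src tgt bar Ω l ∧
        IsSource tgt (l.foldl (fun Ω' j => mutate src tgt bar j Ω') Ω) i := by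
  intro n
  induction n with
  | zero =>
      intro Ω hac hcard
      refine ⟨[], trivial, ?_⟩
      intro h hh ht
      have hmem : src h ∈ {v : I | TransGen (QRel src tgt Ω) v i} :=
        TransGen.single ⟨h, hh, rfl, ht⟩
      have : {v : I | TransGen (QRel src tgt Ω) v i}.ncard ≠ 0 := by
        have hfin : {v : I | TransGen (QRel src tgt Ω) v i}.Finite := Set.toFinite _
        simp [Set.ncard_eq_zero hfin, Set.eq_empty_iff_forall_notMem]
        exact ⟨src h, hmem⟩
      omega
  | succ n ih =>
      intro Ω hac hcard
      by_cases hi : IsSource tgt Ω i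
      · exact ⟨[], trivial, hi⟩
      · set S : Set I := {v : I | TransGen (QRel src tgt Ω) v i} with hS
        -- S is nonempty
        have hSne : S.Nonempty := by
          simp only [IsSource, not_forall] at hi
          obtain ⟨h, hh, ht⟩ := hi
          rw [not_not] at ht
          exact ⟨src h, TransGen.single ⟨h, hh, rfl, ht⟩⟩
        -- minimal element
        haveI : IsTrans I (TransGen (QRel src tgt Ω)) := ⟨fun _ _ _ => TransGen.trans⟩
        haveI : IsIrrefl I (TransGen (QRel src tgt Ω)) := ⟨no_loop src tgt hac⟩
        have hwf : WellFounded (TransGen (QRel src tgt Ω)) :=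
          Finite.wellFounded_of_trans_of_irrefl _
        obtain ⟨j, hjS, hjmin⟩ := hwf.has_min S hSne
        -- j is a source of Ω
        have hjsrc : IsSource tgt Ω j := by
          intro h hh ht
          have h1 : TransGen (QRel src tgt Ω) (src h) j := TransGen.single ⟨h, hh, rfl, ht⟩
          exact hjmin (src h) (h1.trans hjS) h1
        have hij : i ≠ j := by
          rintro rfl
          exact no_loop src tgt hac i hjS
        set Ω' := mutate src tgt bar j Ω with hΩ'
        have hac' : ¬ HasCycle src tgt Ω' :=
          mutate_acyclic src tgt bar hbar_src hbar_tgt hjsrc hac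
        have hF1 := mutate_src_ne src tgt bar hbar_src hbar_tgt hjsrc
        -- any vertex with a TransGen path in Ω' to i is ≠ j
        have hne_j : ∀ v, TransGen (QRel src tgt Ω') v i → v ≠ j := by
          intro v hv
          obtain ⟨c, ⟨e, he, h1, _⟩, _⟩ := (Relation.TransGen.head'_iff).mp hv
          rw [← h1]; exact hF1 e he
        -- transfer paths
        have htrans : ∀ v, TransGen (QRel src tgt Ω') v i → TransGen (QRel src tgt Ω) v i := by
          intro v hv
          induction hv using TransGen.head_induction_on with
          | single hr =>
              obtain ⟨e, he, h1, h2⟩ := hr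
              have : e ∈ Ω := mutate_mem_of_tgt_ne src tgt bar hbar_src hbar_tgt hjsrc he
                (by rw [h2]; exact hij)
              exact TransGen.single ⟨e, this, h1, h2⟩
          | head hr htl ihp =>
              rename_i a c
              obtain ⟨e, he, h1, h2⟩ := hr
              have hc : c ≠ j := hne_j c htl
              have : e ∈ Ω := mutate_mem_of_tgt_ne src tgt bar hbar_src hbar_tgt hjsrc he
                (by rw [h2]; exact hc)
              exact TransGen.head ⟨e, this, h1, h2⟩ ihp
        -- the reach set strictly decreases
        have hsub : {v : I | TransGen (QRel src tgt Ω') v i} ⊂ S := by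
          constructor
          · intro v hv; exact htrans v hv
          · intro hcon
            exact hne_j j (hcon hjS) rfl
        have hcard' : {v : I | TransGen (QRel src tgt Ω') v i}.ncard ≤ n := by
          have := Set.ncard_lt_ncard hsub (Set.toFinite S)
          omega
        obtain ⟨l, hgood, hsrc⟩ := ih Ω' hac' hcard'
        exact ⟨j :: l, ⟨hjsrc, hgood⟩, hsrc⟩


/-- For a finite quiver whose orientation has no oriented cycles and any vertex `i`,
there is a sequence of vertices, each a source at its turn, whose successive mutations
turn `i` into a source. -/
theorem stmt_2 {I H : Type} [Fintype I] [Fintype H] [DecidableEq I] [DecidableEq H]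
    (src tgt : H → I) (bar : H → H)
    (hinv : Function.Involutive bar) (hfpf : ∀ h, bar h ≠ h)
    (hbar_src : ∀ h, src (bar h) = tgt h) (hbar_tgt : ∀ h, tgt (bar h) = src h)
    (Ω : Finset H) (hΩ : ∀ h, h ∈ Ω ↔ bar h ∉ Ω)
    (hacyclic : ¬ HasCycle src tgt Ω) (i : I) :
    ∃ l : List I, GoodSeq src tgt bar Ω l ∧
      IsSource tgt (l.foldl (fun Ω' j => mutate src tgt bar j Ω') Ω) i := by
  exact main_lemma src tgt bar hbar_src hbar_tgt i _ Ω hacyclic le_rfl
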